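/- Assume for all x, y that Φ_{x,y}(0) = 0, Φ_{x,y} is nondecreasing on [0,∞), and (Φ2): the map t ↦ Φ_{x,y}(√t) is convex on [0,∞). Then for all measurable u, v : ℝ^N → ℝ one has I₁((u − v)/2) + I₁((u + v)/2) ≤ (1/2)·I₁(u) + (1/2)·I₁(v). -/

import Mathlib

open MeasureTheory Set Filter
open scoped ENNReal

noncomputable section

abbrev Eucl (N : ℕ) := EuclideanSpace ℝ (Fin N)

variable {N : ℕ}

/-- `Q = ℝ^{2N} \ (CΩ)^2`. -/
def Qset (Ω : Set (Eucl N)) : Set (Eucl N × Eucl N) := (Ωᶜ ×ˢ Ωᶜ)ᶜ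

/-- the functional `I₁` (with values in `[0,∞]`). -/
def Ifun (Φ : Eucl N → Eucl N → ℝ → ℝ) (s : ℝ) (Ω : Set (Eucl N)) (β : Eucl N → ℝ)
    (u : Eucl N → ℝ) : ℝ≥0∞ :=
  (1/2) * (∫⁻ p in Qset Ω, ENNReal.ofReal
      (Φ p.1 p.2 (|u p.1 - u p.2| / dist p.1 p.2 ^ s) / dist p.1 p.2 ^ (N : ℝ)))
    + (∫⁻ x in Ω, ENNReal.ofReal (Φ x x |u x|))
    + ∫⁻ x in Ωᶜ, ENNReal.ofReal (β x * Φ x x |u x|)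

section Aux

lemma superadd' {ψ : ℝ → ℝ} (hψ : ConvexOn ℝ (Set.Ici 0) ψ) (h0 : ψ 0 = 0)
    {x y : ℝ} (hx : 0 ≤ x) (hy : 0 ≤ y) : ψ x + ψ y ≤ ψ (x + y) := by
  rcases eq_or_lt_of_le (by linarith : (0:ℝ) ≤ x + y) with h | h
  · have hx0 : x = 0 := by linarith
    have hy0 : y = 0 := by linarith
    simp [hx0, hy0, h0]
  · set c := x + y with hc
    have hcne : c ≠ 0 := ne_of_gt h
    have ex : (x/c) • c + (y/c) • (0:ℝ) = x := by
      simp [smul_eq_mul]; field_simp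
    have ey : (y/c) • c + (x/c) • (0:ℝ) = y := by
      simp [smul_eq_mul]; field_simp
    have h1 := hψ.2 (Set.mem_Ici.2 (le_of_lt h)) (Set.mem_Ici.2 le_rfl)
        (div_nonneg hx h.le) (div_nonneg hy h.le) (by field_simp <;> linarith)
    have h2 := hψ.2 (Set.mem_Ici.2 (le_of_lt h)) (Set.mem_Ici.2 le_rfl)
        (div_nonneg hy h.le) (div_nonneg hx h.le) (by field_simp <;> linarith)
    rw [ex] at h1
    rw [ey] at h2
    rw [h0] at h1 h2
    have hsum : x/c + y/c = 1 := by field_simp; linarith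
    have hc2 : (x/c)*ψ c + (y/c)*ψ c = ψ c := by rw [← add_mul, hsum, one_mul]
    simp only [smul_eq_mul, mul_zero, add_zero] at h1 h2
    linarith

lemma key' {φ : ℝ → ℝ} (h0 : φ 0 = 0)
    (hcvx : ConvexOn ℝ (Set.Ici 0) (fun t => φ (Real.sqrt t))) (a b : ℝ) :
    φ (|a-b|/2) + φ (|a+b|/2) ≤ (φ |a| + φ |b|)/2 := by
  set ψ : ℝ → ℝ := fun t => φ (Real.sqrt t) with hψ
  have hψ0 : ψ 0 = 0 := by simp [hψ, Real.sqrt_zero, h0]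
  have e1 : φ (|a-b|/2) = ψ ((a-b)^2/4) := by
    rw [hψ]; congr 1
    rw [show (a-b)^2/4 = ((a-b)/2)^2 by ring, Real.sqrt_sq_eq_abs, abs_div]
    norm_num
  have e2 : φ (|a+b|/2) = ψ ((a+b)^2/4) := by
    rw [hψ]; congr 1
    rw [show (a+b)^2/4 = ((a+b)/2)^2 by ring, Real.sqrt_sq_eq_abs, abs_div]
    norm_num
  have e3 : φ |a| = ψ (a^2) := by rw [hψ]; congr 1; rw [Real.sqrt_sq_eq_abs]
  have e4 : φ |b| = ψ (b^2) := by rw [hψ]; congr 1; rw [Real.sqrt_sq_eq_abs]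
  rw [e1, e2, e3, e4]
  have h1 : ψ ((a-b)^2/4) + ψ ((a+b)^2/4) ≤ ψ ((a-b)^2/4 + (a+b)^2/4) :=
    superadd' hcvx hψ0 (by positivity) (by positivity)
  have harg : (a-b)^2/4 + (a+b)^2/4 = (1/2 : ℝ) * a^2 + (1/2 : ℝ) * b^2 := by ring
  have h2 : ψ ((1/2 : ℝ) * a^2 + (1/2 : ℝ) * b^2) ≤ (1/2:ℝ) * ψ (a^2) + (1/2:ℝ) * ψ (b^2) := by
    have := hcvx.2 (Set.mem_Ici.2 (sq_nonneg a)) (Set.mem_Ici.2 (sq_nonneg b))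
      (by norm_num : (0:ℝ) ≤ 1/2) (by norm_num : (0:ℝ) ≤ 1/2) (by norm_num)
    simpa [smul_eq_mul] using this
  rw [harg] at h1
  linarith

/-- measurability of `a ↦ ofReal (φ a (g a))`. -/
lemma meas_comp' {α : Type*} [MeasurableSpace α] (φ : α → ℝ → ℝ)
    (hm : ∀ t : ℝ, Measurable fun a => φ a t)
    (h0 : ∀ a, φ a 0 = 0)
    (hmono : ∀ a, MonotoneOn (φ a) (Set.Ici 0))
    (hcont : ∀ a, ContinuousOn (φ a) (Set.Ioi 0))
    (g : α → ℝ) (hg : Measurable g) (hgnn : ∀ a, 0 ≤ g a) :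
    Measurable fun a => ENNReal.ofReal (φ a (g a)) := by
  have hrep : (fun a => ENNReal.ofReal (φ a (g a))) =
      fun a => ⨆ q : ℚ, if 0 < (q:ℝ) ∧ (q:ℝ) ≤ g a then ENNReal.ofReal (φ a q) else 0 := by
    funext a
    rcases eq_or_lt_of_le (hgnn a) with h | h
    · rw [← h, h0 a, ENNReal.ofReal_zero]
      symm
      rw [ENNReal.iSup_eq_zero]
      intro q
      rw [if_neg]
      rintro ⟨h1, h2⟩; linarith
    · have hub : ∀ q : ℚ, (if 0 < (q:ℝ) ∧ (q:ℝ) ≤ g a then ENNReal.ofReal (φ a q) else 0)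
          ≤ ENNReal.ofReal (φ a (g a)) := by
        intro q
        split_ifs with hq
        · exact ENNReal.ofReal_le_ofReal
            (hmono a (Set.mem_Ici.2 hq.1.le) (Set.mem_Ici.2 (hgnn a)) hq.2)
        · exact zero_le
      refine le_antisymm ?_ (iSup_le hub)
      refine ENNReal.le_of_forall_pos_le_add (fun ε hε _ => ?_)
      have hc : ContinuousWithinAt (φ a) (Set.Ioi 0) (g a) := hcont a (g a) h
      have hS : {x : ℝ | φ a (g a) - ε < φ a x} ∈ nhdsWithin (g a) (Set.Ioi 0) := by
        apply hc
        exact Ioi_mem_nhds (by simpa using hε)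
      rw [Metric.mem_nhdsWithin_iff] at hS
      obtain ⟨δ, hδ, hball⟩ := hS
      obtain ⟨q, hq1, hq2⟩ := exists_rat_btwn (show max (g a - δ) 0 < g a from
        max_lt (by linarith) h)
      have hq0 : 0 < (q:ℝ) := lt_of_le_of_lt (le_max_right _ _) hq1
      have hqball : (q:ℝ) ∈ Metric.ball (g a) δ ∩ Set.Ioi 0 := by
        constructor
        · rw [Metric.mem_ball, Real.dist_eq, abs_sub_lt_iff]
          constructor
          · linarith
          · have := lt_of_le_of_lt (le_max_left (g a - δ) 0) hq1
            linarith
        · exact hq0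
      have hφq : φ a (g a) - ε < φ a q := hball hqball
      calc ENNReal.ofReal (φ a (g a)) ≤ ENNReal.ofReal (φ a q + ε) :=
            ENNReal.ofReal_le_ofReal (by linarith)
        _ ≤ ENNReal.ofReal (φ a q) + ENNReal.ofReal ε := ENNReal.ofReal_add_le
        _ ≤ (⨆ q' : ℚ, if 0 < (q':ℝ) ∧ (q':ℝ) ≤ g a then ENNReal.ofReal (φ a q') else 0) + ε := by
            gcongr
            · refine le_trans (le_of_eq ?_) (le_iSup _ q)
              rw [if_pos ⟨hq0, hq2.le⟩]
            · simp
  rw [hrep]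
  refine Measurable.iSup fun q => Measurable.ite ?_ ((hm q).ennreal_ofReal) measurable_const
  by_cases hq : 0 < (q:ℝ)
  · simp only [hq, true_and]
    exact measurableSet_le measurable_const hg
  · simp only [hq, false_and]
    exact MeasurableSet.empty

lemma cont_of_cvx {φ : ℝ → ℝ}
    (hcvx : ConvexOn ℝ (Set.Ici 0) (fun t => φ (Real.sqrt t))) :
    ContinuousOn φ (Set.Ioi 0) := by
  have h1 : ContinuousOn (fun t => φ (Real.sqrt t)) (interior (Set.Ici (0:ℝ))) :=
    hcvx.continuousOn_interior
  rw [interior_Ici] at h1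
  have h2 : ContinuousOn (fun t : ℝ => φ (Real.sqrt (t^2))) (Set.Ioi 0) :=
    h1.comp ((continuous_pow 2).continuousOn) (fun t ht => by
      simpa using pow_pos (Set.mem_Ioi.1 ht) 2)
  refine h2.congr (fun t ht => ?_)
  show φ t = φ (Real.sqrt (t^2))
  rw [Real.sqrt_sq (le_of_lt (Set.mem_Ioi.1 ht))]

lemma div_le_div_nn {a b c : ℝ} (h : a ≤ b) (hc : 0 ≤ c) : a / c ≤ b / c := by
  rcases eq_or_lt_of_le hc with h0 | h0
  · rw [← h0]; simp
  · exact (div_le_div_iff_of_pos_right h0).2 h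

lemma ofReal_step {P₁ P₂ Q₁ Q₂ : ℝ} (h1 : 0 ≤ P₁) (h2 : 0 ≤ P₂)
    (h : P₁ + P₂ ≤ (Q₁ + Q₂)/2) :
    ENNReal.ofReal P₁ + ENNReal.ofReal P₂
      ≤ 2⁻¹ * (ENNReal.ofReal Q₁ + ENNReal.ofReal Q₂) := by
  calc ENNReal.ofReal P₁ + ENNReal.ofReal P₂ = ENNReal.ofReal (P₁ + P₂) :=
        (ENNReal.ofReal_add h1 h2).symm
    _ ≤ ENNReal.ofReal ((Q₁ + Q₂)/2) := ENNReal.ofReal_le_ofReal h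
    _ = ENNReal.ofReal (Q₁ + Q₂) / ENNReal.ofReal 2 := ENNReal.ofReal_div_of_pos two_pos
    _ ≤ (ENNReal.ofReal Q₁ + ENNReal.ofReal Q₂) / 2 := by
        rw [ENNReal.ofReal_ofNat]
        exact ENNReal.div_le_div ENNReal.ofReal_add_le le_rfl
    _ = 2⁻¹ * (ENNReal.ofReal Q₁ + ENNReal.ofReal Q₂) := by
        rw [div_eq_mul_inv, mul_comm]

lemma int_step {α : Type*} [MeasurableSpace α] {μ : Measure α}
    {f₁ f₂ g₁ g₂ : α → ℝ≥0∞} (hg₁ : AEMeasurable g₁ μ)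
    (hpt : ∀ᵐ a ∂μ, f₁ a + f₂ a ≤ 2⁻¹ * (g₁ a + g₂ a)) :
    (∫⁻ a, f₁ a ∂μ) + ∫⁻ a, f₂ a ∂μ
      ≤ 2⁻¹ * ∫⁻ a, g₁ a ∂μ + 2⁻¹ * ∫⁻ a, g₂ a ∂μ := by
  calc (∫⁻ a, f₁ a ∂μ) + ∫⁻ a, f₂ a ∂μ ≤ ∫⁻ a, f₁ a + f₂ a ∂μ := le_lintegral_add _ _
    _ ≤ ∫⁻ a, 2⁻¹ * (g₁ a + g₂ a) ∂μ := lintegral_mono_ae hpt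
    _ = 2⁻¹ * ∫⁻ a, g₁ a + g₂ a ∂μ := lintegral_const_mul' _ _ (by simp)
    _ = 2⁻¹ * ((∫⁻ a, g₁ a ∂μ) + ∫⁻ a, g₂ a ∂μ) := by rw [lintegral_add_left' hg₁]
    _ = 2⁻¹ * ∫⁻ a, g₁ a ∂μ + 2⁻¹ * ∫⁻ a, g₂ a ∂μ := mul_add _ _ _

lemma ptA_aux {φ : ℝ → ℝ} (h0 : φ 0 = 0) (hnn : ∀ t : ℝ, 0 ≤ t → 0 ≤ φ t)
    (hcvx : ConvexOn ℝ (Set.Ici 0) (fun t => φ (Real.sqrt t))) (U V : ℝ) {c e : ℝ}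
    (hc : 0 ≤ c) (he : 0 ≤ e) :
    ENNReal.ofReal (φ (|(U - V)/2| / c) / e) + ENNReal.ofReal (φ (|(U + V)/2| / c) / e)
      ≤ 2⁻¹ * (ENNReal.ofReal (φ (|U| / c) / e) + ENNReal.ofReal (φ (|V| / c) / e)) := by
  have hkey := key' h0 hcvx (U/c) (V/c)
  have ea1 : |(U - V)/2| / c = |U/c - V/c| / 2 := by
    rw [div_sub_div_same, abs_div, abs_div, abs_two, abs_of_nonneg hc, div_right_comm]
  have ea2 : |(U + V)/2| / c = |U/c + V/c| / 2 := by
    rw [← add_div, abs_div, abs_div, abs_two, abs_of_nonneg hc, div_right_comm]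
  have eu : |U| / c = |U/c| := by rw [abs_div, abs_of_nonneg hc]
  have ev : |V| / c = |V/c| := by rw [abs_div, abs_of_nonneg hc]
  rw [ea1, ea2, eu, ev]
  have harg1 : (0:ℝ) ≤ |U/c - V/c| / 2 := by positivity
  have harg2 : (0:ℝ) ≤ |U/c + V/c| / 2 := by positivity
  refine ofReal_step (div_nonneg (hnn _ harg1) he) (div_nonneg (hnn _ harg2) he) ?_
  calc φ (|U/c - V/c| / 2) / e + φ (|U/c + V/c| / 2) / e
      = (φ (|U/c - V/c| / 2) + φ (|U/c + V/c| / 2)) / e := (add_div _ _ _).symm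
    _ ≤ (φ |U/c| + φ |V/c|) / 2 / e := div_le_div_nn hkey he
    _ = (φ |U/c| / e + φ |V/c| / e) / 2 := by rw [div_right_comm, add_div]

end Aux

/-- convexity-type inequality for `I₁` under condition (Φ2). -/
theorem statement10
    (N : ℕ) (hN : 1 ≤ N)
    (Ω : Set (Eucl N)) (hΩo : IsOpen Ω) (hΩb : Bornology.IsBounded Ω) (hΩne : Ω.Nonempty)
    (s : ℝ) (hs : s ∈ Set.Ioo (0:ℝ) 1)
    (Φ : Eucl N → Eucl N → ℝ → ℝ)
    (hΦmeas : ∀ t : ℝ, Measurable fun p : Eucl N × Eucl N => Φ p.1 p.2 t)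
    (hΦnn : ∀ x y t, 0 ≤ t → 0 ≤ Φ x y t)
    (hΦ0 : ∀ x y : Eucl N, Φ x y 0 = 0)
    (hΦmono : ∀ x y : Eucl N, MonotoneOn (Φ x y) (Set.Ici 0))
    (hΦ2 : ∀ x y : Eucl N, ConvexOn ℝ (Set.Ici 0) fun t => Φ x y (Real.sqrt t))
    (β : Eucl N → ℝ) (hβm : Measurable β)
    (hβb : ∃ C : ℝ, ∀ᵐ x ∂(volume.restrict Ωᶜ), |β x| ≤ C)
    (hβ0 : ∀ᵐ x ∂(volume.restrict Ωᶜ), 0 ≤ β x)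
    (u v : Eucl N → ℝ) (hu : Measurable u) (hv : Measurable v) :
    Ifun Φ s Ω β (fun x => (u x - v x) / 2) + Ifun Φ s Ω β (fun x => (u x + v x) / 2) ≤
      (1/2) * Ifun Φ s Ω β u + (1/2) * Ifun Φ s Ω β v := by
  -- notation
  set w₁ : Eucl N → ℝ := fun x => (u x - v x) / 2 with hw₁
  set w₂ : Eucl N → ℝ := fun x => (u x + v x) / 2 with hw₂
  -- the three families of integrands
  set FA : (Eucl N → ℝ) → (Eucl N × Eucl N) → ℝ := fun w p =>
    Φ p.1 p.2 (|w p.1 - w p.2| / dist p.1 p.2 ^ s) / dist p.1 p.2 ^ (N : ℝ) with hFA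
  set fA : (Eucl N → ℝ) → (Eucl N × Eucl N) → ℝ≥0∞ := fun w p =>
    ENNReal.ofReal (FA w p) with hfA
  set fB : (Eucl N → ℝ) → Eucl N → ℝ≥0∞ := fun w x =>
    ENNReal.ofReal (Φ x x |w x|) with hfB
  set fC : (Eucl N → ℝ) → Eucl N → ℝ≥0∞ := fun w x =>
    ENNReal.ofReal (β x * Φ x x |w x|) with hfC
  -- continuity of Φ x y on (0,∞)
  have hcont : ∀ x y : Eucl N, ContinuousOn (Φ x y) (Set.Ioi 0) :=
    fun x y => cont_of_cvx (hΦ2 x y)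
  -- nonnegativity of dist-powers
  have hds : ∀ p : Eucl N × Eucl N, (0:ℝ) ≤ dist p.1 p.2 ^ s :=
    fun p => Real.rpow_nonneg dist_nonneg _
  have hdN : ∀ p : Eucl N × Eucl N, (0:ℝ) ≤ dist p.1 p.2 ^ (N:ℝ) :=
    fun p => Real.rpow_nonneg dist_nonneg _
  -- pointwise inequality for the A-part
  have hkeyA : ∀ w : Eucl N → ℝ, ∀ p : Eucl N × Eucl N,
      |w p.1 - w p.2| / dist p.1 p.2 ^ s
        = |(w p.1 - w p.2) / dist p.1 p.2 ^ s| := by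
    intro w p
    rw [abs_div, abs_of_nonneg (hds p)]
  have hptA : ∀ p : Eucl N × Eucl N, fA w₁ p + fA w₂ p ≤ 2⁻¹ * (fA u p + fA v p) := by
    intro p
    have h1 : w₁ p.1 - w₁ p.2 = ((u p.1 - u p.2) - (v p.1 - v p.2)) / 2 := by
      simp only [hw₁]; ring
    have h2 : w₂ p.1 - w₂ p.2 = ((u p.1 - u p.2) + (v p.1 - v p.2)) / 2 := by
      simp only [hw₂]; ring
    simp only [hfA, hFA, h1, h2]
    exact ptA_aux (hΦ0 p.1 p.2) (hΦnn p.1 p.2) (hΦ2 p.1 p.2)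
      (u p.1 - u p.2) (v p.1 - v p.2) (hds p) (hdN p)
  -- pointwise inequality for the B-part
  have hptB : ∀ x : Eucl N, fB w₁ x + fB w₂ x ≤ 2⁻¹ * (fB u x + fB v x) := by
    intro x
    have hkey := key' (hΦ0 x x) (hΦ2 x x) (u x) (v x)
    have e1 : |w₁ x| = |u x - v x| / 2 := by rw [hw₁]; rw [abs_div]; norm_num
    have e2 : |w₂ x| = |u x + v x| / 2 := by rw [hw₂]; rw [abs_div]; norm_num
    refine ofReal_step (hΦnn _ _ _ (abs_nonneg _)) (hΦnn _ _ _ (abs_nonneg _)) ?_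
    rw [e1, e2]
    exact hkey
  -- pointwise a.e. inequality for the C-part
  have hptC : ∀ᵐ x ∂(volume.restrict Ωᶜ), fC w₁ x + fC w₂ x ≤ 2⁻¹ * (fC u x + fC v x) := by
    filter_upwards [hβ0] with x hβx
    have hkey := key' (hΦ0 x x) (hΦ2 x x) (u x) (v x)
    have e1 : |w₁ x| = |u x - v x| / 2 := by rw [hw₁]; rw [abs_div]; norm_num
    have e2 : |w₂ x| = |u x + v x| / 2 := by rw [hw₂]; rw [abs_div]; norm_num
    have hΦ1 : 0 ≤ Φ x x |w₁ x| := hΦnn _ _ _ (abs_nonneg _)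
    have hΦ2' : 0 ≤ Φ x x |w₂ x| := hΦnn _ _ _ (abs_nonneg _)
    refine ofReal_step (mul_nonneg hβx hΦ1) (mul_nonneg hβx hΦ2') ?_
    rw [e1, e2] at *
    nlinarith [hkey, hβx]
  -- measurability of the u/v integrands
  have hdistm : Measurable fun p : Eucl N × Eucl N => dist p.1 p.2 :=
    (continuous_fst.dist continuous_snd).measurable
  have hgA : ∀ w : Eucl N → ℝ, Measurable w →
      Measurable fun p : Eucl N × Eucl N => |w p.1 - w p.2| / dist p.1 p.2 ^ s := by
    intro w hw
    exact (((hw.comp measurable_fst).sub (hw.comp measurable_snd)).abs).div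
      ((continuous_fst.dist continuous_snd).rpow_const (fun p => Or.inr hs.1.le)).measurable
  have hmeasA : ∀ w : Eucl N → ℝ, Measurable w → Measurable (fA w) := by
    intro w hw
    have h1 : Measurable fun p : Eucl N × Eucl N =>
        ENNReal.ofReal (Φ p.1 p.2 (|w p.1 - w p.2| / dist p.1 p.2 ^ s)) :=
      meas_comp' (fun p t => Φ p.1 p.2 t) hΦmeas (fun p => hΦ0 p.1 p.2)
        (fun p => hΦmono p.1 p.2) (fun p => hcont p.1 p.2) _ (hgA w hw)
        (fun p => div_nonneg (abs_nonneg _) (hds p))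
    have h2 : fA w = fun p =>
        (ENNReal.ofReal (Φ p.1 p.2 (|w p.1 - w p.2| / dist p.1 p.2 ^ s)))
          * ENNReal.ofReal ((dist p.1 p.2 ^ (N:ℝ))⁻¹) := by
      funext p
      rw [hfA]
      simp only
      rw [hFA]
      simp only
      rw [div_eq_mul_inv, ENNReal.ofReal_mul (hΦnn _ _ _ (div_nonneg (abs_nonneg _) (hds p)))]
    rw [h2]
    exact h1.mul (((continuous_fst.dist continuous_snd).rpow_const
      (fun p => Or.inr (Nat.cast_nonneg N))).measurable.inv.ennreal_ofReal)
  have hΦdiag : ∀ t : ℝ, Measurable fun x : Eucl N => Φ x x t := by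
    intro t
    exact (hΦmeas t).comp (measurable_id.prodMk measurable_id)
  have hmeasB : ∀ w : Eucl N → ℝ, Measurable w → Measurable (fB w) := by
    intro w hw
    exact meas_comp' (fun x t => Φ x x t) hΦdiag (fun x => hΦ0 x x)
      (fun x => hΦmono x x) (fun x => hcont x x) _ hw.abs (fun x => abs_nonneg _)
  have hmeasC : ∀ w : Eucl N → ℝ, Measurable w → AEMeasurable (fC w) (volume.restrict Ωᶜ) := by
    intro w hw
    have h1 : fC w =ᵐ[volume.restrict Ωᶜ]
        fun x => ENNReal.ofReal (β x) * ENNReal.ofReal (Φ x x |w x|) := by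
      filter_upwards [hβ0] with x hβx
      rw [hfC]
      simp only
      rw [ENNReal.ofReal_mul hβx]
    exact AEMeasurable.congr ((hβm.ennreal_ofReal.mul (hmeasB w hw)).aemeasurable) h1.symm
  -- the three integral inequalities
  have hA : (∫⁻ p in Qset Ω, fA w₁ p) + (∫⁻ p in Qset Ω, fA w₂ p)
      ≤ 2⁻¹ * (∫⁻ p in Qset Ω, fA u p) + 2⁻¹ * (∫⁻ p in Qset Ω, fA v p) :=
    int_step ((hmeasA u hu).aemeasurable) (Filter.Eventually.of_forall hptA)
  have hB : (∫⁻ x in Ω, fB w₁ x) + (∫⁻ x in Ω, fB w₂ x)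
      ≤ 2⁻¹ * (∫⁻ x in Ω, fB u x) + 2⁻¹ * (∫⁻ x in Ω, fB v x) :=
    int_step ((hmeasB u hu).aemeasurable) (Filter.Eventually.of_forall hptB)
  have hC : (∫⁻ x in Ωᶜ, fC w₁ x) + (∫⁻ x in Ωᶜ, fC w₂ x)
      ≤ 2⁻¹ * (∫⁻ x in Ωᶜ, fC u x) + 2⁻¹ * (∫⁻ x in Ωᶜ, fC v x) :=
    int_step (hmeasC u hu) hptC
  -- assembly
  have hIfun : ∀ w : Eucl N → ℝ, Ifun Φ s Ω β w =
      2⁻¹ * (∫⁻ p in Qset Ω, fA w p) + (∫⁻ x in Ω, fB w x) + ∫⁻ x in Ωᶜ, fC w x := by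
    intro w
    rw [Ifun, one_div, hfA, hFA, hfB, hfC]
  rw [hIfun w₁, hIfun w₂, hIfun u, hIfun v, one_div]
  set A₁ := ∫⁻ p in Qset Ω, fA w₁ p
  set A₂ := ∫⁻ p in Qset Ω, fA w₂ p
  set Au := ∫⁻ p in Qset Ω, fA u p
  set Av := ∫⁻ p in Qset Ω, fA v p
  set B₁ := ∫⁻ x in Ω, fB w₁ x
  set B₂ := ∫⁻ x in Ω, fB w₂ x
  set Bu := ∫⁻ x in Ω, fB u x
  set Bv := ∫⁻ x in Ω, fB v x
  set C₁ := ∫⁻ x in Ωᶜ, fC w₁ x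
  set C₂ := ∫⁻ x in Ωᶜ, fC w₂ x
  set Cu := ∫⁻ x in Ωᶜ, fC u x
  set Cv := ∫⁻ x in Ωᶜ, fC v x
  calc 2⁻¹ * A₁ + B₁ + C₁ + (2⁻¹ * A₂ + B₂ + C₂)
      = 2⁻¹ * (A₁ + A₂) + ((B₁ + B₂) + (C₁ + C₂)) := by ring
    _ ≤ 2⁻¹ * (2⁻¹ * Au + 2⁻¹ * Av) + ((2⁻¹ * Bu + 2⁻¹ * Bv) + (2⁻¹ * Cu + 2⁻¹ * Cv)) := by
        gcongr <;> assumption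
    _ = 2⁻¹ * (2⁻¹ * Au + Bu + Cu) + 2⁻¹ * (2⁻¹ * Av + Bv + Cv) := by ring
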